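/- Every finite-dimensional associative division algebra over ℝ is isomorphic (as an ℝ-algebra) to ℝ, ℂ, or the quaternions ℍ. -/

import Mathlib

namespace FrobeniusAux

variable {D : Type} [DivisionRing D] [Algebra ℝ D]

lemma expand_sub (a : D) (c : ℝ) :
    (a - c • 1) * (a - c • 1) = a * a - (2 * c) • a + (c * c) • (1 : D) := by
  simp only [mul_sub, sub_mul, smul_mul_assoc, mul_smul_comm, mul_one, one_mul]
  module

/-- Every element not in the image of `ℝ` satisfies a quadratic with negative
"discriminant": after a real shift, its square is a negative real. -/
lemma quad [FiniteDimensional ℝ D] (a : D) (ha : a ∉ Set.range (algebraMap ℝ D)) :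
    ∃ c u : ℝ, u < 0 ∧ (a - c • 1) * (a - c • 1) = u • (1 : D) := by
  have hint : IsIntegral ℝ a := Algebra.IsIntegral.isIntegral a
  have hle : (minpoly ℝ a).natDegree ≤ 2 := (minpoly.irreducible hint).natDegree_le_two
  have hpos : 0 < (minpoly ℝ a).natDegree := minpoly.natDegree_pos hint
  have h1 : (minpoly ℝ a).natDegree ≠ 1 := by
    intro h
    apply ha
    have hdeg : (minpoly ℝ a).degree = 1 := by
      rw [Polynomial.degree_eq_natDegree (minpoly.ne_zero hint), h]; rfl
    obtain ⟨y, hy⟩ := minpoly.degree_eq_one_iff.mp hdeg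
    exact ⟨y, hy⟩
  have h2 : (minpoly ℝ a).natDegree = 2 := by omega
  have key : a * a = (-(minpoly ℝ a).coeff 1) • a + (-(minpoly ℝ a).coeff 0) • (1 : D) := by
    have h0 := minpoly.aeval ℝ a
    rw [Polynomial.aeval_eq_sum_range, h2] at h0
    simp [Finset.sum_range_succ, pow_two] at h0
    have hc2 : (minpoly ℝ a).coeff 2 = 1 := by
      have := (minpoly.monic hint).leadingCoeff
      rwa [Polynomial.leadingCoeff, h2] at this
    rw [hc2, one_smul] at h0
    linear_combination (norm := module) h0
  set b : ℝ := (minpoly ℝ a).coeff 1 with hb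
  set c0 : ℝ := (minpoly ℝ a).coeff 0 with hc0
  have hsq : (a - (-b/2) • 1) * (a - (-b/2) • 1) = ((-b/2) * (-b/2) - c0) • (1 : D) := by
    rw [expand_sub, key]; module
  refine ⟨-b/2, (-b/2) * (-b/2) - c0, ?_, hsq⟩
  by_contra hu
  push_neg at hu
  set r : ℝ := Real.sqrt ((-b/2) * (-b/2) - c0) with hrdef
  have hr : r * r = (-b/2) * (-b/2) - c0 := Real.mul_self_sqrt hu
  have hfac : ((a - (-b/2) • 1) - r • 1) * ((a - (-b/2) • 1) + r • 1) = 0 := by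
    have hexp : ((a - (-b/2) • 1) - r • 1) * ((a - (-b/2) • 1) + r • 1)
        = (a - (-b/2) • 1) * (a - (-b/2) • 1) - (r * r) • (1 : D) := by
      simp only [mul_add, add_mul, mul_sub, sub_mul, smul_mul_assoc, mul_smul_comm,
        mul_one, one_mul]
      module
    rw [hexp, hsq, hr, sub_self]
  rcases mul_eq_zero.mp hfac with h | h
  · apply ha
    refine ⟨-b/2 + r, ?_⟩
    rw [Algebra.algebraMap_eq_smul_one]
    linear_combination (norm := module) -h
  · apply ha
    refine ⟨-b/2 - r, ?_⟩
    rw [Algebra.algebraMap_eq_smul_one]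
    linear_combination (norm := module) -h

/-- "Imaginary" elements: square is a nonpositive real. -/
def IsIm (x : D) : Prop := ∃ u : ℝ, u ≤ 0 ∧ x * x = u • (1 : D)

lemma isIm_smul {x : D} (h : IsIm x) (c : ℝ) : IsIm (c • x) := by
  obtain ⟨u, hu, hx⟩ := h
  exact ⟨c * c * u, mul_nonpos_of_nonneg_of_nonpos (mul_self_nonneg c) hu,
    by rw [smul_mul_smul_comm, hx, smul_smul]⟩

lemma smul_one_inj [Nontrivial D] {r s : ℝ} (h : r • (1 : D) = s • 1) : r = s := by
  apply (algebraMap ℝ D).injective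
  simpa [Algebra.algebraMap_eq_smul_one] using h

lemma isIm_not_real [Nontrivial D] {x : D} (h : IsIm x) (hx : x ≠ 0) (r : ℝ) :
    x ≠ r • (1 : D) := by
  obtain ⟨u, hu, hxx⟩ := h
  intro hr
  have h1 : x * x = (r * r) • (1 : D) := by
    rw [hr, smul_mul_smul_comm, one_mul]
  have h2 : r * r = u := smul_one_inj (h1.symm.trans hxx)
  have hr0 : r = 0 := by nlinarith
  rw [hr0, zero_smul] at hr
  exact hx hr

lemma isIm_sq_neg [Nontrivial D] {x : D} (h : IsIm x) (hx : x ≠ 0) :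
    ∃ u : ℝ, u < 0 ∧ x * x = u • (1 : D) := by
  obtain ⟨u, hu, hxx⟩ := h
  refine ⟨u, ?_, hxx⟩
  rcases hu.lt_or_eq with h' | h'
  · exact h'
  · exfalso
    rw [h', zero_smul] at hxx
    exact hx (mul_self_eq_zero.mp hxx)

lemma claimA [Nontrivial D] {x y : D} (hx : IsIm x) (hy : IsIm y) (hx0 : x ≠ 0) (hy0 : y ≠ 0)
    (hind : ∀ c : ℝ, y ≠ c • x) :
    ∀ a b c : ℝ, a • x + b • y = c • (1 : D) → a = 0 ∧ b = 0 ∧ c = 0 := by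
  obtain ⟨ux, hux, hxx⟩ := isIm_sq_neg hx hx0
  obtain ⟨uy, huy, hyy⟩ := isIm_sq_neg hy hy0
  intro a b c habc
  by_cases hb : b = 0
  · subst hb
    rw [zero_smul, add_zero] at habc
    by_cases ha : a = 0
    · subst ha
      rw [zero_smul] at habc
      refine ⟨rfl, rfl, ?_⟩
      have : (0 : ℝ) • (1 : D) = c • 1 := by rw [zero_smul, habc]
      exact (smul_one_inj this).symm
    · exfalso
      refine isIm_not_real hx hx0 (a⁻¹ * c) ?_
      rw [← smul_smul, ← habc, smul_smul, inv_mul_cancel₀ ha, one_smul]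
  · exfalso
    have h' : b • y = c • (1 : D) - a • x := by
      linear_combination (norm := module) habc
    have hy2 : y = (b⁻¹ * c) • (1 : D) + (-(b⁻¹ * a)) • x := by
      have : y = b⁻¹ • (c • (1 : D) - a • x) := by
        rw [← h', smul_smul, inv_mul_cancel₀ hb, one_smul]
      rw [this]; module
    have expand : y * y = ((b⁻¹ * c) * (b⁻¹ * c)) • (1 : D)
        + (2 * ((b⁻¹ * c) * (-(b⁻¹ * a)))) • x
        + ((-(b⁻¹ * a)) * (-(b⁻¹ * a))) • (x * x) := by
      conv_lhs => rw [hy2]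
      simp only [add_mul, mul_add, smul_mul_assoc, mul_smul_comm, one_mul, mul_one]
      module
    rw [hxx, hyy] at expand
    by_cases hpq : (b⁻¹ * c) * (-(b⁻¹ * a)) = 0
    · rcases mul_eq_zero.mp hpq with hp | hq
      · rw [hp, zero_smul, zero_add] at hy2
        exact hind _ hy2
      · rw [hq, zero_smul, add_zero] at hy2
        exact isIm_not_real hy hy0 _ hy2
    · have hx_eq : (2 * ((b⁻¹ * c) * (-(b⁻¹ * a)))) • x
          = (uy - (b⁻¹ * c) * (b⁻¹ * c) - ((-(b⁻¹ * a)) * (-(b⁻¹ * a))) * ux) • (1 : D) := by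
        linear_combination (norm := module) -expand
      have h2pq : (2 * ((b⁻¹ * c) * (-(b⁻¹ * a)))) ≠ 0 := by
        intro h; apply hpq; linarith [mul_eq_zero.mp h]
      refine isIm_not_real hx hx0
        ((2 * ((b⁻¹ * c) * (-(b⁻¹ * a))))⁻¹
          * (uy - (b⁻¹ * c) * (b⁻¹ * c) - ((-(b⁻¹ * a)) * (-(b⁻¹ * a))) * ux)) ?_
      rw [← smul_smul, ← hx_eq, smul_smul, inv_mul_cancel₀ h2pq, one_smul]

lemma isIm_add [FiniteDimensional ℝ D] {x y : D} (hx : IsIm x) (hy : IsIm y) :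
    IsIm (x + y) := by
  by_cases hx0 : x = 0
  · simpa [hx0] using hy
  by_cases hy0 : y = 0
  · simpa [hy0] using hx
  by_cases hdep : ∃ c : ℝ, y = c • x
  · obtain ⟨c, rfl⟩ := hdep
    have h1 : x + c • x = (1 + c) • x := by module
    rw [h1]
    exact isIm_smul hx _
  push_neg at hdep
  have hA := claimA hx hy hx0 hy0 hdep
  obtain ⟨ux, hux, hxx⟩ := hx
  obtain ⟨uy, huy, hyy⟩ := hy
  have hr1 : (x + y) ∉ Set.range (algebraMap ℝ D) := by
    rintro ⟨r, hr⟩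
    rw [Algebra.algebraMap_eq_smul_one] at hr
    have : (1 : ℝ) • x + (1 : ℝ) • y = r • (1 : D) := by
      rw [one_smul, one_smul, hr]
    exact one_ne_zero (hA 1 1 r this).1
  have hr2 : (x - y) ∉ Set.range (algebraMap ℝ D) := by
    rintro ⟨r, hr⟩
    rw [Algebra.algebraMap_eq_smul_one] at hr
    have : (1 : ℝ) • x + (-1 : ℝ) • y = r • (1 : D) := by
      linear_combination (norm := module) -hr
    exact one_ne_zero (hA 1 (-1) r this).1
  obtain ⟨c₁, u₁, hu₁, h₁⟩ := quad (x + y) hr1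
  obtain ⟨c₂, u₂, hu₂, h₂⟩ := quad (x - y) hr2
  rw [expand_sub] at h₁ h₂
  have e1 : (x + y) * (x + y) = x * x + (x * y + y * x) + y * y := by noncomm_ring
  have e2 : (x - y) * (x - y) = x * x - (x * y + y * x) + y * y := by noncomm_ring
  rw [e1, hxx, hyy] at h₁
  rw [e2, hxx, hyy] at h₂
  have key : (2 * c₁ + 2 * c₂) • x + (2 * c₁ - 2 * c₂) • y
      = (2 * ux + 2 * uy + c₁ * c₁ + c₂ * c₂ - u₁ - u₂) • (1 : D) := by
    linear_combination (norm := module) -h₁ - h₂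
  obtain ⟨hk1, hk2, -⟩ := hA _ _ _ key
  have hc₁ : c₁ = 0 := by linarith
  refine ⟨u₁, hu₁.le, ?_⟩
  rw [hc₁] at h₁
  rw [e1, hxx, hyy]
  linear_combination (norm := module) h₁

lemma isIm_comm [FiniteDimensional ℝ D] {x y : D} (hx : IsIm x) (hy : IsIm y) :
    ∃ r : ℝ, x * y + y * x = r • (1 : D) := by
  obtain ⟨u, hu, hxy⟩ := isIm_add hx hy
  obtain ⟨ux, -, hxx⟩ := hx
  obtain ⟨uy, -, hyy⟩ := hy
  refine ⟨u - ux - uy, ?_⟩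
  have e1 : (x + y) * (x + y) = x * x + (x * y + y * x) + y * y := by noncomm_ring
  rw [e1, hxx, hyy] at hxy
  linear_combination (norm := module) hxy

lemma unitize {x : D} {u : ℝ} (hu : u < 0) (hx : x * x = u • (1 : D)) :
    ((Real.sqrt (-u))⁻¹ • x) * ((Real.sqrt (-u))⁻¹ • x) = -1 := by
  rw [smul_mul_smul_comm, hx, smul_smul]
  have hs : Real.sqrt (-u) * Real.sqrt (-u) = -u := Real.mul_self_sqrt (by linarith)
  have hs0 : Real.sqrt (-u) ≠ 0 := by
    intro h; rw [h, mul_zero] at hs; linarith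
  have h2 : (Real.sqrt (-u))⁻¹ * (Real.sqrt (-u))⁻¹ * u = -1 := by
    field_simp
    linarith
  rw [h2, neg_smul, one_smul]

end FrobeniusAux

open FrobeniusAux in
/-- Frobenius' theorem: every finite-dimensional associative division algebra over `ℝ`
is isomorphic to `ℝ`, `ℂ` or the quaternions `ℍ`. -/
theorem frobenius_real_division_algebras
    (D : Type) [DivisionRing D] [Algebra ℝ D] [FiniteDimensional ℝ D] :
    Nonempty (D ≃ₐ[ℝ] ℝ) ∨ Nonempty (D ≃ₐ[ℝ] ℂ) ∨ Nonempty (D ≃ₐ[ℝ] Quaternion ℝ) := by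
  by_cases hR : ∀ b : D, b ∈ Set.range (algebraMap ℝ D)
  · left
    have hbij : Function.Bijective (Algebra.ofId ℝ D) := by
      constructor
      · exact (algebraMap ℝ D).injective
      · intro b
        obtain ⟨r, hr⟩ := hR b
        exact ⟨r, hr⟩
    exact ⟨(AlgEquiv.ofBijective (Algebra.ofId ℝ D) hbij).symm⟩
  push_neg at hR
  obtain ⟨a, ha⟩ := hR
  obtain ⟨c, u, hu, hsq⟩ := quad a ha
  obtain ⟨x, hxdef⟩ : ∃ x : D, x = a - c • 1 := ⟨_, rfl⟩
  rw [← hxdef] at hsq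
  have hx0 : x ≠ 0 := by
    intro h
    apply ha
    refine ⟨c, ?_⟩
    rw [Algebra.algebraMap_eq_smul_one]
    have h' : a - c • (1:D) = 0 := by rw [← hxdef, h]
    exact (sub_eq_zero.mp h').symm
  have hxIm : IsIm x := ⟨u, hu.le, hsq⟩
  obtain ⟨i, hidef⟩ : ∃ i : D, i = (Real.sqrt (-u))⁻¹ • x := ⟨_, rfl⟩
  have hi : i * i = -1 := by rw [hidef]; exact unitize hu hsq
  have hiIm : IsIm i := by rw [hidef]; exact isIm_smul hxIm _
  have hs0 : Real.sqrt (-u) ≠ 0 := by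
    have : (0:ℝ) < -u := by linarith
    exact ne_of_gt (Real.sqrt_pos.mpr this)
  have hi0 : i ≠ 0 := by rw [hidef]; exact smul_ne_zero (inv_ne_zero hs0) hx0
  by_cases hC : ∀ b : D, b ∈ Submodule.span ℝ ({1, i} : Set D)
  · right; left
    have hsurj : Function.Surjective (Complex.liftAux i hi) := by
      intro b
      obtain ⟨p, q, hpq⟩ := Submodule.mem_span_pair.mp (hC b)
      refine ⟨⟨p, q⟩, ?_⟩
      rw [Complex.liftAux_apply]
      rw [Algebra.algebraMap_eq_smul_one]
      exact hpq
    exact ⟨(AlgEquiv.ofBijective (Complex.liftAux i hi)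
      ⟨(Complex.liftAux i hi).toRingHom.injective, hsurj⟩).symm⟩
  · right; right
    push_neg at hC
    obtain ⟨y, hy⟩ := hC
    have h1mem : (1 : D) ∈ Submodule.span ℝ ({1, i} : Set D) :=
      Submodule.subset_span (by simp)
    have himem : i ∈ Submodule.span ℝ ({1, i} : Set D) :=
      Submodule.subset_span (by simp)
    have hy_not : y ∉ Set.range (algebraMap ℝ D) := by
      rintro ⟨r, rfl⟩
      apply hy
      rw [Algebra.algebraMap_eq_smul_one]
      exact Submodule.smul_mem _ r h1mem
    obtain ⟨c', u', hu', hsq'⟩ := quad y hy_not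
    obtain ⟨y₀, hy₀def⟩ : ∃ z : D, z = y - c' • 1 := ⟨_, rfl⟩
    rw [← hy₀def] at hsq'
    have hy₀Im : IsIm y₀ := ⟨u', hu'.le, hsq'⟩
    have hy₀span : y₀ ∉ Submodule.span ℝ ({1, i} : Set D) := by
      intro h
      apply hy
      have : y = y₀ + c' • (1 : D) := by rw [hy₀def]; module
      rw [this]
      exact Submodule.add_mem _ h (Submodule.smul_mem _ c' h1mem)
    obtain ⟨r, hr⟩ := isIm_comm hiIm hy₀Im
    obtain ⟨j₀, hj₀def⟩ : ∃ z : D, z = y₀ + (r / 2) • i := ⟨_, rfl⟩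
    have hj₀Im : IsIm j₀ := by rw [hj₀def]; exact isIm_add hy₀Im (isIm_smul hiIm _)
    have hj₀span : j₀ ∉ Submodule.span ℝ ({1, i} : Set D) := by
      intro h
      apply hy₀span
      have : y₀ = j₀ - (r / 2) • i := by rw [hj₀def]; module
      rw [this]
      exact Submodule.sub_mem _ h (Submodule.smul_mem _ _ himem)
    have hj₀0 : j₀ ≠ 0 := by
      intro h
      apply hj₀span
      rw [h]
      exact Submodule.zero_mem _
    have hanti₀ : i * j₀ + j₀ * i = 0 := by
      have expand : i * j₀ + j₀ * i
          = (i * y₀ + y₀ * i) + (r / 2) • (i * i) + (r / 2) • (i * i) := by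
        rw [hj₀def]
        simp only [add_mul, mul_add, smul_mul_assoc, mul_smul_comm]
        module
      rw [expand, hr, hi]
      module
    obtain ⟨v, hv, hj₀sq⟩ := isIm_sq_neg hj₀Im hj₀0
    obtain ⟨j, hjdef⟩ : ∃ z : D, z = (Real.sqrt (-v))⁻¹ • j₀ := ⟨_, rfl⟩
    have hj : j * j = -1 := by rw [hjdef]; exact unitize hv hj₀sq
    have hjIm : IsIm j := by rw [hjdef]; exact isIm_smul hj₀Im _
    have hj₀anti : j₀ * i = -(i * j₀) := by
      linear_combination (norm := module) hanti₀
    have hanti : j * i = -(i * j) := by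
      rw [hjdef, smul_mul_assoc, mul_smul_comm, hj₀anti]
      module
    have hij_anti : i * j + j * i = 0 := by rw [hanti]; module
    have him : i * i = (-1 : ℝ) • (1 : D) := by rw [hi]; module
    have hjm : j * j = (-1 : ℝ) • (1 : D) := by rw [hj]; module
    let B : QuaternionAlgebra.Basis D (-1 : ℝ) (0 : ℝ) (-1 : ℝ) :=
      { i := i, j := j, k := i * j, i_mul_i := by rw [him, zero_smul, add_zero],
        j_mul_j := hjm,
        i_mul_j := rfl, j_mul_i := by rw [hanti, zero_smul, zero_sub] }
    have hksq : (i * j) * (i * j) = -1 := by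
      have h1 : (i * j) * (i * j) = -((i * i) * (j * j)) := by
        rw [show (i * j) * (i * j) = i * (j * i) * j from by noncomm_ring, hanti]
        noncomm_ring
      rw [h1, hi, hj]
      noncomm_ring
    have hkIm : IsIm (i * j) := ⟨-1, by norm_num, by rw [hksq]; module⟩
    have hsurj : Function.Surjective (B.liftHom) := by
      intro b
      by_cases hb : b ∈ Set.range (algebraMap ℝ D)
      · obtain ⟨rb, rfl⟩ := hb
        refine ⟨⟨rb, 0, 0, 0⟩, ?_⟩
        show algebraMap ℝ D rb + (0:ℝ) • i + (0:ℝ) • j + (0:ℝ) • (i * j) = algebraMap ℝ D rb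
        simp
      · obtain ⟨cb, ub, hub, hsqb⟩ := quad b hb
        obtain ⟨b₀, hb₀def⟩ : ∃ z : D, z = b - cb • 1 := ⟨_, rfl⟩
        rw [← hb₀def] at hsqb
        have hb₀Im : IsIm b₀ := ⟨ub, hub.le, hsqb⟩
        obtain ⟨r₁, hr₁⟩ := isIm_comm hb₀Im hiIm
        obtain ⟨r₂, hr₂⟩ := isIm_comm hb₀Im hjIm
        obtain ⟨w, hwdef⟩ : ∃ z : D, z = b₀ + (r₁ / 2) • i + (r₂ / 2) • j := ⟨_, rfl⟩
        have hwIm : IsIm w := by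
          rw [hwdef]; exact isIm_add (isIm_add hb₀Im (isIm_smul hiIm _)) (isIm_smul hjIm _)
        have hwi : w * i + i * w = 0 := by
          have expand : w * i + i * w
              = (b₀ * i + i * b₀) + (r₁ / 2) • (i * i) + (r₁ / 2) • (i * i)
                + (r₂ / 2) • (j * i) + (r₂ / 2) • (i * j) := by
            rw [hwdef]
            simp only [add_mul, mul_add, smul_mul_assoc, mul_smul_comm]
            module
          rw [expand, hr₁, hi, hanti]
          module
        have hwj : w * j + j * w = 0 := by
          have expand : w * j + j * w
              = (b₀ * j + j * b₀) + (r₁ / 2) • (i * j) + (r₁ / 2) • (j * i)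
                + (r₂ / 2) • (j * j) + (r₂ / 2) • (j * j) := by
            rw [hwdef]
            simp only [add_mul, mul_add, smul_mul_assoc, mul_smul_comm]
            module
          rw [expand, hr₂, hj, hanti]
          module
        have hwi' : w * i = -(i * w) := by linear_combination (norm := module) hwi
        have hwj' : w * j = -(j * w) := by linear_combination (norm := module) hwj
        have hwk : w * (i * j) = (i * j) * w := by
          calc w * (i * j) = (w * i) * j := by noncomm_ring
            _ = -(i * (w * j)) := by rw [hwi']; noncomm_ring
            _ = i * (j * w) := by rw [hwj']; noncomm_ring
            _ = (i * j) * w := by noncomm_ring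
        obtain ⟨r₃, hr₃⟩ := isIm_comm hwIm hkIm
        rw [← hwk] at hr₃
        have h2wk : w * (i * j) = (r₃ / 2) • (1 : D) := by
          linear_combination (norm := module) (2:ℝ)⁻¹ • hr₃
        have hwval : w = (-(r₃ / 2)) • (i * j) := by
          have h1 : w * ((i * j) * (i * j)) = (r₃ / 2) • (i * j) := by
            rw [show w * ((i * j) * (i * j)) = (w * (i * j)) * (i * j) from by noncomm_ring,
              h2wk, smul_mul_assoc, one_mul]
          rw [hksq, mul_neg_one] at h1
          linear_combination (norm := module) -h1
        refine ⟨⟨cb, -(r₁ / 2), -(r₂ / 2), -(r₃ / 2)⟩, ?_⟩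
        show algebraMap ℝ D cb + (-(r₁ / 2)) • i + (-(r₂ / 2)) • j + (-(r₃ / 2)) • (i * j) = b
        rw [Algebra.algebraMap_eq_smul_one]
        linear_combination (norm := module) -hwval + hwdef + hb₀def
    let f : Quaternion ℝ →ₐ[ℝ] D := B.liftHom
    exact ⟨(AlgEquiv.ofBijective f ⟨f.toRingHom.injective, hsurj⟩).symm⟩
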